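/- arXiv:2006.10579 — 3 statements merged into one kernel-verified Lean document; each statement's English description precedes it below -/
import Mathlib

section
/- Let B > 0 and let f, g ∈ PW²_B be real-valued on the real line (i.e., f(t) ∈ ℝ and g(t) ∈ ℝ for all t ∈ ℝ). If |f(t)| = |g(t)| for all t ∈ ℝ, then f = g or f = −g (as functions on ℂ). -/
open MeasureTheory Complex Real Set

/-- The short-time Fourier transform of `f` with window `φ`:
`V_φ f (x, ω) = ∫ f(t) conj(φ(t-x)) e^{-2πitω} dt`. -/
noncomputable def STFT (φ f : ℝ → ℂ) (x ω : ℝ) : ℂ :=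
  ∫ t : ℝ, f t * (starRingEnd ℂ) (φ (t - x)) *
    Complex.exp (-2 * Real.pi * Complex.I * t * ω)

/-- The ambiguity function of `f`: `A f (x, ω) = e^{πixω} V_f f (x, ω)`. -/
noncomputable def ambiguity (f : ℝ → ℂ) (x ω : ℝ) : ℂ :=
  Complex.exp (Real.pi * Complex.I * x * ω) * STFT f f x ω

/-- The Paley–Wiener space `PW^p_B`: `f : ℂ → ℂ` belongs to it iff there is
`F ∈ L^p([-B,B])` with `f(z) = ∫_{-B}^B F(ξ) e^{2πiξz} dξ` for all `z`. -/
def MemPW (B : ℝ) (p : ENNReal) (f : ℂ → ℂ) : Prop :=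
  ∃ F : ℝ → ℂ, MeasureTheory.MemLp F p (volume.restrict (Set.Icc (-B) B)) ∧
    ∀ z : ℂ, f z = ∫ ξ in Set.Icc (-B) B, F ξ * Complex.exp (2 * Real.pi * Complex.I * ξ * z)

open Metric Filter in
lemma memPW_differentiable {B : ℝ} {f : ℂ → ℂ} (hf : ∃ F : ℝ → ℂ,
    MeasureTheory.MemLp F 2 (volume.restrict (Set.Icc (-B) B)) ∧
    ∀ z : ℂ, f z = ∫ ξ in Set.Icc (-B) B, F ξ * Complex.exp (2 * Real.pi * Complex.I * ξ * z)) :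
    Differentiable ℂ f := by
  obtain ⟨F, hF2, hrep⟩ := hf
  set μ := volume.restrict (Set.Icc (-B) B) with hμ
  have hfin : IsFiniteMeasure μ := by
    constructor
    rw [hμ, Measure.restrict_apply_univ]
    exact measure_Icc_lt_top
  have hFint : Integrable F μ := hF2.integrable (by norm_num)
  have hae : ∀ᵐ ξ ∂μ, ξ ∈ Set.Icc (-B) B := ae_restrict_mem measurableSet_Icc
  intro z₀
  set G : ℂ → ℝ → ℂ := fun z ξ => F ξ * Complex.exp (2 * Real.pi * Complex.I * ξ * z) with hG
  set G' : ℂ → ℝ → ℂ := fun z ξ =>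
    F ξ * (Complex.exp (2 * Real.pi * Complex.I * ξ * z) * (2 * Real.pi * Complex.I * ξ)) with hG'
  set C : ℝ := Real.exp (2 * Real.pi * (|B| + 1) * (|z₀.im| + 1)) with hC
  have key : ∀ z ∈ ball z₀ 1, ∀ ξ ∈ Set.Icc (-B) B,
      ‖Complex.exp (2 * Real.pi * Complex.I * ξ * z)‖ ≤ C := by
    intro z hz ξ hξ
    rw [Complex.norm_exp]
    apply Real.exp_le_exp.2
    have hre : (2 * Real.pi * Complex.I * ξ * z).re = -(2 * Real.pi * ξ * z.im) := by
      simp [Complex.mul_re, Complex.mul_im]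
      try ring
    rw [hre]
    have hξB : |ξ| ≤ |B| := by
      rw [abs_le]
      exact ⟨by linarith [hξ.1, le_abs_self B], by linarith [hξ.2, le_abs_self B]⟩
    have hzim : |z.im| ≤ |z₀.im| + 1 := by
      have h2 : ‖z - z₀‖ ≤ 1 := by
        rw [← Complex.dist_eq]; exact le_of_lt (mem_ball.1 hz)
      have h3 : |z.im - z₀.im| ≤ 1 := le_trans (by simpa using Complex.abs_im_le_norm (z - z₀)) h2
      have := abs_sub_abs_le_abs_sub z.im z₀.im
      linarith [abs_sub_abs_le_abs_sub z.im z₀.im]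
    calc -(2 * Real.pi * ξ * z.im) ≤ |2 * Real.pi * ξ * z.im| := neg_le_abs _
      _ = 2 * Real.pi * |ξ| * |z.im| := by
          rw [abs_mul, abs_mul, abs_of_pos Real.two_pi_pos]
      _ ≤ 2 * Real.pi * (|B| + 1) * (|z₀.im| + 1) := by
          apply mul_le_mul
          · exact mul_le_mul_of_nonneg_left (by linarith) (by positivity)
          · exact hzim
          · exact abs_nonneg _
          · positivity
  have hCpos : 0 < C := Real.exp_pos _
  have meas_G : ∀ z : ℂ, AEStronglyMeasurable (G z) μ := fun z =>
    hFint.aestronglyMeasurable.mul (Continuous.aestronglyMeasurable (by fun_prop))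
  have meas_G' : AEStronglyMeasurable (G' z₀) μ :=
    hFint.aestronglyMeasurable.mul (Continuous.aestronglyMeasurable (by fun_prop))
  have hGint : Integrable (G z₀) μ := by
    apply Integrable.mono (hFint.norm.const_mul C) (meas_G z₀)
    filter_upwards [hae] with ξ hξ
    rw [hG]
    have hle : ‖F ξ * Complex.exp (2 * Real.pi * Complex.I * ξ * z₀)‖ ≤ C * ‖F ξ‖ := by
      rw [norm_mul, mul_comm]
      exact mul_le_mul_of_nonneg_right (key z₀ (mem_ball_self one_pos) ξ hξ) (norm_nonneg _)
    rw [Real.norm_eq_abs]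
    exact hle.trans (le_abs_self _)
  have h_bound : ∀ᵐ ξ ∂μ, ∀ z ∈ ball z₀ 1,
      ‖G' z ξ‖ ≤ ‖F ξ‖ * (C * (2 * Real.pi * (|B| + 1))) := by
    filter_upwards [hae] with ξ hξ z hz
    rw [hG', norm_mul, norm_mul]
    apply mul_le_mul_of_nonneg_left _ (norm_nonneg _)
    apply mul_le_mul (key z hz ξ hξ) _ (norm_nonneg _) (le_of_lt hCpos)
    have hξB : |ξ| ≤ |B| := by
      rw [abs_le]
      exact ⟨by linarith [hξ.1, le_abs_self B], by linarith [hξ.2, le_abs_self B]⟩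
    calc ‖(2 * Real.pi * Complex.I * ξ : ℂ)‖ = 2 * Real.pi * |ξ| := by
          simp [norm_mul, Complex.norm_real, Complex.norm_I, Real.norm_eq_abs,
            abs_of_pos Real.pi_pos]
      _ ≤ 2 * Real.pi * (|B| + 1) := by
          exact mul_le_mul_of_nonneg_left (by linarith) (by positivity)
  have hbi : Integrable (fun ξ => ‖F ξ‖ * (C * (2 * Real.pi * (|B| + 1)))) μ :=
    hFint.norm.mul_const _
  have h_diff : ∀ᵐ ξ ∂μ, ∀ z ∈ ball z₀ 1, HasDerivAt (fun z => G z ξ) (G' z ξ) z := by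
    apply Filter.Eventually.of_forall
    intro ξ z _
    rw [hG, hG']
    have h1 : HasDerivAt (fun z : ℂ => 2 * Real.pi * Complex.I * ξ * z)
        (2 * Real.pi * Complex.I * ξ) z := by
      simpa using (hasDerivAt_id z).const_mul (2 * Real.pi * Complex.I * (ξ:ℂ))
    exact (h1.cexp).const_mul (F ξ)
  have hmain := hasDerivAt_integral_of_dominated_loc_of_deriv_le (ball_mem_nhds z₀ one_pos)
    (Filter.Eventually.of_forall meas_G) hGint meas_G' h_bound hbi h_diff
  have : f = fun z => ∫ ξ, G z ξ ∂μ := by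
    funext z; rw [hrep z, hμ]
  rw [this]
  exact hmain.2.differentiableAt

open Metric Filter in
/-- a function in `PW²_B` that is real-valued on the real line is determined
up to global sign by its absolute values on the real line. -/
theorem paley_wiener_real_sign_retrieval (B : ℝ) (hB : 0 < B) (f g : ℂ → ℂ)
    (hf : MemPW B 2 f) (hg : MemPW B 2 g)
    (hfr : ∀ t : ℝ, (f t).im = 0) (hgr : ∀ t : ℝ, (g t).im = 0)
    (habs : ∀ t : ℝ, ‖f t‖ = ‖g t‖) :
    f = g ∨ f = -g := by
  have hfd : Differentiable ℂ f := memPW_differentiable hf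
  have hgd : Differentiable ℂ g := memPW_differentiable hg
  -- f t ^ 2 = g t ^ 2 for real t
  have hsq : ∀ t : ℝ, (f t - g t) * (f t + g t) = 0 := by
    intro t
    have hf' : f t = ((f t).re : ℂ) := by
      apply Complex.ext <;> simp [hfr t]
    have hg' : g t = ((g t).re : ℂ) := by
      apply Complex.ext <;> simp [hgr t]
    have habs' : |(f t).re| = |(g t).re| := by
      have := habs t
      rwa [hf', hg', Complex.norm_real, Complex.norm_real, Real.norm_eq_abs,
        Real.norm_eq_abs] at this
    have h2 : (f t).re ^ 2 = (g t).re ^ 2 := by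
      rw [← _root_.sq_abs, ← _root_.sq_abs ((g t).re), habs']
    have : f t ^ 2 = g t ^ 2 := by
      rw [hf', hg']
      push_cast
      exact_mod_cast congrArg (fun x : ℝ => (x : ℂ)) h2
    ring_nf
    linear_combination this
  -- the product (f - g)(f + g) is entire and vanishes frequently near 0
  have hana : AnalyticOnNhd ℂ (fun z => (f z - g z) * (f z + g z)) univ := fun z _ =>
    ((hfd.sub hgd).mul (hfd.add hgd)).analyticAt z
  have hzero : AnalyticOnNhd ℂ (fun _ : ℂ => (0 : ℂ)) univ := fun z _ => analyticAt_const
  have hfreq : ∃ᶠ z in nhdsWithin (0 : ℂ) {(0:ℂ)}ᶜ,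
      (fun z => (f z - g z) * (f z + g z)) z = (fun _ => (0:ℂ)) z := by
    have htend : Tendsto (fun n : ℕ => ((((n : ℝ) + 1)⁻¹ : ℝ) : ℂ)) atTop
        (nhdsWithin (0 : ℂ) {(0:ℂ)}ᶜ) := by
      apply tendsto_nhdsWithin_of_tendsto_nhds_of_eventually_within
      · have : Tendsto (fun n : ℕ => ((n : ℝ) + 1)⁻¹) atTop (nhds 0) :=
          tendsto_one_div_add_atTop_nhds_zero_nat.congr (by intro n; rw [one_div])
        have h2 := (Complex.continuous_ofReal.tendsto 0).comp this
        exact h2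
      · apply Filter.Eventually.of_forall
        intro n
        simp only [mem_compl_iff, mem_singleton_iff]
        intro h
        have : ((n : ℝ) + 1)⁻¹ = 0 := by exact_mod_cast h
        have : (0:ℝ) < ((n:ℝ)+1)⁻¹ := by positivity
        simp_all
    exact htend.frequently (Filter.Eventually.of_forall fun n => hsq _).frequently
  have hprod : (fun z => (f z - g z) * (f z + g z)) = fun _ => (0 : ℂ) :=
    hana.eq_of_frequently_eq hzero hfreq
  -- zero-product: f = g or f = -g
  by_cases hfg : f = g
  · exact Or.inl hfg
  · right
    obtain ⟨z₀, hz₀⟩ : ∃ z₀, f z₀ - g z₀ ≠ 0 := by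
      by_contra h
      push_neg at h
      exact hfg (funext fun z => sub_eq_zero.1 (h z))
    have hcont : ContinuousAt (fun z => f z - g z) z₀ :=
      ((hfd z₀).sub (hgd z₀)).continuousAt
    have hev : ∀ᶠ z in nhds z₀, f z - g z ≠ 0 :=
      hcont.eventually_ne hz₀
    have hev2 : (fun z => f z + g z) =ᶠ[nhds z₀] (fun _ => (0:ℂ)) := by
      filter_upwards [hev] with z hz
      have := congrFun hprod z
      rcases mul_eq_zero.1 this with h | h
      · exact absurd h hz
      · exact h
    have hsum : AnalyticOnNhd ℂ (fun z => f z + g z) univ := fun z _ =>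
      (hfd.add hgd).analyticAt z
    have := hsum.eqOn_zero_of_preconnected_of_eventuallyEq_zero isPreconnected_univ
      (mem_univ z₀) hev2 
    funext z
    have hz := this (mem_univ z)
    simp only [Pi.zero_apply] at hz
    have : f z + g z = 0 := hz
    simp [Pi.neg_apply]
    linear_combination this
end

section
/- Let ε, B > 0 with ε < 2B, set c = 1/(2B − ε), and define f(z) = sinc(εz)·e^{πi(2B−ε)z} and g(z) = sinc(εz)·e^{−πi(2B−ε)z} for z ∈ ℂ. Then: (1) f, g ∈ PW²_B, with f(z) = (1/ε)∫_{−B}^{B} χ_{[B−ε, B]}(ξ) e^{2πi ξ z} dξ and g(z) = (1/ε)∫_{−B}^{B} χ_{[−B, −B+ε]}(ξ) e^{2πi ξ z} dξ; (2) |f(t)| = |g(t)| for all t ∈ ℝ; (3) f(t)·conj(f(t − c)) = g(t)·conj(g(t − c)) for all t ∈ ℝ; (4) there is no α ∈ ℝ with f = e^{iα} g. -/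
open MeasureTheory Complex Real Set

/-- The (complex) normalized sinc function: `sinc z = sin(πz)/(πz)` for `z ≠ 0`, `sinc 0 = 1`. -/
noncomputable def csinc (z : ℂ) : ℂ :=
  if z = 0 then 1 else Complex.sin (Real.pi * z) / (Real.pi * z)

lemma sinc_cex_alg (a b : ℝ) (hab : a < b) (z : ℂ) (hz : z ≠ 0) :
    (Complex.exp (2 * Real.pi * Complex.I * z * b) - Complex.exp (2 * Real.pi * Complex.I * z * a)) / (2 * Real.pi * Complex.I * z)
      = (b - a : ℂ) * csinc ((b - a) * z) * Complex.exp (Real.pi * Complex.I * (a + b) * z) := by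
  have hba : ((b : ℂ) - a) ≠ 0 := by
    simpa using sub_ne_zero.mpr (by exact_mod_cast hab.ne' : (b:ℂ) ≠ (a:ℂ))
  have hπ : (Real.pi : ℂ) ≠ 0 := by exact_mod_cast Real.pi_ne_zero
  rw [csinc, if_neg (mul_ne_zero hba hz), Complex.sin]
  set D := Complex.exp (Real.pi * Complex.I * (a + b) * z) with hD
  have hDne : D ≠ 0 := Complex.exp_ne_zero _
  have h1 : Complex.exp (-(↑Real.pi * (((b:ℂ) - a) * z)) * Complex.I) * D
      = Complex.exp (2 * Real.pi * Complex.I * z * a) := by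
    rw [hD, ← Complex.exp_add]; congr 1; ring
  have h2 : Complex.exp ((↑Real.pi * (((b:ℂ) - a) * z)) * Complex.I) * D
      = Complex.exp (2 * Real.pi * Complex.I * z * b) := by
    rw [hD, ← Complex.exp_add]; congr 1; ring
  rw [← h1, ← h2]
  have hI := Complex.I_ne_zero
  field_simp
  ring_nf
  rw [Complex.I_sq]
  ring

lemma sinc_cex_rep_gen (B a b : ℝ) (hab : a < b) (h1 : -B ≤ a) (h2 : b ≤ B) (z : ℂ) :
    (∫ ξ in Set.Icc (-B) B, Set.indicator (Set.Icc a b) (fun _ => (1 : ℂ)) ξ *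
        Complex.exp (2 * Real.pi * Complex.I * ξ * z))
      = (b - a : ℂ) * csinc ((b - a) * z) * Complex.exp (Real.pi * Complex.I * (a + b) * z) := by
  have hfun : (fun ξ : ℝ => Set.indicator (Set.Icc a b) (fun _ => (1 : ℂ)) ξ *
        Complex.exp (2 * Real.pi * Complex.I * ξ * z))
      = Set.indicator (Set.Icc a b) (fun ξ : ℝ => Complex.exp (2 * Real.pi * Complex.I * ξ * z)) := by
    funext ξ; by_cases h : ξ ∈ Set.Icc a b <;> simp [h]
  rw [hfun, MeasureTheory.integral_indicator measurableSet_Icc,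
    Measure.restrict_restrict measurableSet_Icc,
    Set.inter_eq_left.mpr (Set.Icc_subset_Icc h1 h2)]
  rw [MeasureTheory.integral_Icc_eq_integral_Ioc, ← intervalIntegral.integral_of_le hab.le]
  by_cases hz : z = 0
  · subst hz
    simp [csinc, intervalIntegral.integral_const]
  · have harg : ∀ ξ : ℝ, (2 * (Real.pi:ℂ) * Complex.I * ξ * z) = (2 * Real.pi * Complex.I * z) * ξ := by
      intro ξ; ring
    simp only [harg]
    have hc : (2 * (Real.pi:ℂ) * Complex.I * z) ≠ 0 := by
      apply mul_ne_zero (mul_ne_zero (mul_ne_zero two_ne_zero (by exact_mod_cast Real.pi_ne_zero)) Complex.I_ne_zero) hz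
    rw [integral_exp_mul_complex hc, ← sinc_cex_alg a b hab z hz]

lemma sinc_cex_memPW (B a b : ℝ) (hab : a < b) (h1 : -B ≤ a) (h2 : b ≤ B)
    (r : ℂ) (f : ℂ → ℂ)
    (hf : ∀ z : ℂ, f z = r * ∫ ξ in Set.Icc (-B) B,
        Set.indicator (Set.Icc a b) (fun _ => (1 : ℂ)) ξ *
          Complex.exp (2 * Real.pi * Complex.I * ξ * z)) :
    MemPW B 2 f := by
  refine ⟨Set.indicator (Set.Icc a b) (fun _ => r), ?_, ?_⟩
  · refine memLp_indicator_const 2 measurableSet_Icc r (Or.inr ?_)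
    rw [Measure.restrict_apply measurableSet_Icc]
    exact ((measure_mono Set.inter_subset_right).trans_lt measure_Icc_lt_top).ne
  · intro z
    rw [hf z, ← MeasureTheory.integral_const_mul]
    congr 1
    funext ξ
    by_cases h : ξ ∈ Set.Icc a b <;> simp [h]

/-- with `c = 1/(2B-ε) > 1/(2B)`, the functions
`f(z) = sinc(εz)e^{πi(2B-ε)z}` and `g(z) = sinc(εz)e^{-πi(2B-ε)z}` lie in `PW²_B`, have the
stated Fourier representations, the same absolute values on `ℝ`, the same correlations
`f(t)conj(f(t-c))`, yet do not agree up to a global phase. -/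
theorem sinc_two_line_counterexample (ε B : ℝ) (hε : 0 < ε) (hB : 0 < B) (hεB : ε < 2 * B)
    (c : ℝ) (hc : c = 1 / (2 * B - ε))
    (f g : ℂ → ℂ)
    (hfdef : ∀ z : ℂ, f z = csinc (ε * z) * Complex.exp (Real.pi * Complex.I * (2 * B - ε) * z))
    (hgdef : ∀ z : ℂ, g z = csinc (ε * z) * Complex.exp (-(Real.pi * Complex.I * (2 * B - ε) * z))) :
    ((∀ z : ℂ, f z = (1 / ε : ℂ) *
        ∫ ξ in Set.Icc (-B) B, Set.indicator (Set.Icc (B - ε) B) (fun _ => (1 : ℂ)) ξ *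
          Complex.exp (2 * Real.pi * Complex.I * ξ * z)) ∧
      MemPW B 2 f) ∧
    ((∀ z : ℂ, g z = (1 / ε : ℂ) *
        ∫ ξ in Set.Icc (-B) B, Set.indicator (Set.Icc (-B) (-B + ε)) (fun _ => (1 : ℂ)) ξ *
          Complex.exp (2 * Real.pi * Complex.I * ξ * z)) ∧
      MemPW B 2 g) ∧
    (∀ t : ℝ, ‖f t‖ = ‖g t‖) ∧
    (∀ t : ℝ, f t * (starRingEnd ℂ) (f ((t - c : ℝ) : ℂ)) =
      g t * (starRingEnd ℂ) (g ((t - c : ℝ) : ℂ))) ∧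
    ¬ ∃ α : ℝ, f = fun z => Complex.exp (Complex.I * α) * g z := by
  have hεc : (ε : ℂ) ≠ 0 := by exact_mod_cast hε.ne'
  have h2Bε : (2 * B - ε) ≠ 0 := by linarith
  have hfrep : ∀ z : ℂ, f z = (1 / ε : ℂ) *
      ∫ ξ in Set.Icc (-B) B, Set.indicator (Set.Icc (B - ε) B) (fun _ => (1 : ℂ)) ξ *
        Complex.exp (2 * Real.pi * Complex.I * ξ * z) := by
    intro z
    rw [hfdef z, sinc_cex_rep_gen B (B - ε) B (by linarith) (by linarith) le_rfl z]
    have e1 : ((B : ℂ) - ((B - ε : ℝ) : ℂ)) = ε := by push_cast; ring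
    have e2 : (((B - ε : ℝ) : ℂ) + B) = 2 * B - ε := by push_cast; ring
    rw [e1, e2]
    field_simp
  have hgrep : ∀ z : ℂ, g z = (1 / ε : ℂ) *
      ∫ ξ in Set.Icc (-B) B, Set.indicator (Set.Icc (-B) (-B + ε)) (fun _ => (1 : ℂ)) ξ *
        Complex.exp (2 * Real.pi * Complex.I * ξ * z) := by
    intro z
    rw [hgdef z, sinc_cex_rep_gen B (-B) (-B + ε) (by linarith) le_rfl (by linarith) z]
    have e1 : (((-B + ε : ℝ) : ℂ) - ((-B : ℝ) : ℂ)) = ε := by push_cast; ring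
    have e2 : (Real.pi : ℂ) * Complex.I * (((-B : ℝ) : ℂ) + ((-B + ε : ℝ) : ℂ)) * z
        = -(Real.pi * Complex.I * (2 * B - ε) * z) := by push_cast; ring
    rw [e1, e2]
    field_simp
  refine ⟨⟨hfrep, sinc_cex_memPW B (B - ε) B (by linarith) (by linarith) le_rfl _ f hfrep⟩,
    ⟨hgrep, sinc_cex_memPW B (-B) (-B + ε) (by linarith) le_rfl (by linarith) _ g hgrep⟩,
    ?_, ?_, ?_⟩
  · -- norms
    intro t
    rw [hfdef, hgdef, norm_mul, norm_mul]
    congr 1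
    rw [Complex.norm_exp, Complex.norm_exp]
    congr 1
    simp
  · -- correlation
    intro t
    rw [hfdef, hfdef, hgdef, hgdef]
    simp only [map_mul]
    have h1c : ((2 * B - ε : ℝ) : ℂ) * c = 1 := by
      have : (2 * B - ε) * c = 1 := by rw [hc]; field_simp
      exact_mod_cast this
    have hE : Complex.exp (Real.pi * Complex.I * (2 * B - ε) * (t : ℂ)) *
        (starRingEnd ℂ) (Complex.exp (Real.pi * Complex.I * (2 * B - ε) * ((t - c : ℝ) : ℂ))) = -1 := by
      rw [← Complex.exp_conj, ← Complex.exp_add, show ((Real.pi : ℂ) * Complex.I * (2 * B - ε) * ((t - c : ℝ) : ℂ)) = (Real.pi : ℂ) * ((2 * B - ε) * ((t - c : ℝ))) * Complex.I by push_cast; ring]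
      rw [show (starRingEnd ℂ) ((Real.pi : ℂ) * (((2:ℂ) * B - ε) * ((t - c : ℝ) : ℂ)) * Complex.I) = -((Real.pi : ℂ) * (((2:ℂ) * B - ε) * ((t - c : ℝ) : ℂ)) * Complex.I) by simp only [map_neg, map_mul, map_sub, map_add, map_ofNat, Complex.conj_ofReal, Complex.conj_I]; ring]
      rw [show ((Real.pi : ℂ) * Complex.I * (2 * B - ε) * (t : ℂ) + -((Real.pi : ℂ) * (((2:ℂ) * B - ε) * ((t - c : ℝ) : ℂ)) * Complex.I)) = (Real.pi : ℂ) * Complex.I by push_cast at h1c ⊢; linear_combination (Real.pi : ℂ) * Complex.I * h1c]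
      exact Complex.exp_pi_mul_I
    have hG : Complex.exp (-(Real.pi * Complex.I * (2 * B - ε) * (t : ℂ))) *
        (starRingEnd ℂ) (Complex.exp (-(Real.pi * Complex.I * (2 * B - ε) * ((t - c : ℝ) : ℂ)))) = -1 := by
      rw [← Complex.exp_conj, ← Complex.exp_add, show (-((Real.pi : ℂ) * Complex.I * (2 * B - ε) * ((t - c : ℝ) : ℂ))) = (-((Real.pi : ℂ) * ((2 * B - ε) * ((t - c : ℝ))))) * Complex.I by push_cast; ring]
      rw [show (starRingEnd ℂ) ((-((Real.pi : ℂ) * (((2:ℂ) * B - ε) * ((t - c : ℝ) : ℂ)))) * Complex.I) = ((Real.pi : ℂ) * (((2:ℂ) * B - ε) * ((t - c : ℝ) : ℂ))) * Complex.I by simp only [map_neg, map_mul, map_sub, map_add, map_ofNat, Complex.conj_ofReal, Complex.conj_I]; ring]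
      rw [show (-((Real.pi : ℂ) * Complex.I * (2 * B - ε) * (t : ℂ)) + ((Real.pi : ℂ) * (((2:ℂ) * B - ε) * ((t - c : ℝ) : ℂ))) * Complex.I) = -((Real.pi : ℂ) * Complex.I) by push_cast at h1c ⊢; linear_combination (-(Real.pi : ℂ) * Complex.I) * h1c]
      rw [Complex.exp_neg, Complex.exp_pi_mul_I]
      norm_num
    calc csinc (ε * t) * Complex.exp (Real.pi * Complex.I * (2 * B - ε) * (t:ℂ)) *
          ((starRingEnd ℂ) (csinc (ε * ((t - c : ℝ) : ℂ))) * (starRingEnd ℂ) (Complex.exp (Real.pi * Complex.I * (2 * B - ε) * ((t - c : ℝ) : ℂ))))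
        = csinc (ε * t) * (starRingEnd ℂ) (csinc (ε * ((t - c : ℝ) : ℂ))) *
          (Complex.exp (Real.pi * Complex.I * (2 * B - ε) * (t:ℂ)) * (starRingEnd ℂ) (Complex.exp (Real.pi * Complex.I * (2 * B - ε) * ((t - c : ℝ) : ℂ)))) := by ring
      _ = csinc (ε * t) * (starRingEnd ℂ) (csinc (ε * ((t - c : ℝ) : ℂ))) * (-1) := by rw [hE]
      _ = csinc (ε * t) * (starRingEnd ℂ) (csinc (ε * ((t - c : ℝ) : ℂ))) *
          (Complex.exp (-(Real.pi * Complex.I * (2 * B - ε) * (t:ℂ))) * (starRingEnd ℂ) (Complex.exp (-(Real.pi * Complex.I * (2 * B - ε) * ((t - c : ℝ) : ℂ))))) := by rw [hG]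
      _ = _ := by ring
  · -- no global phase
    rintro ⟨α, hα⟩
    have h0 := congrFun hα 0
    have hI := congrFun hα Complex.I
    simp only [hfdef, hgdef] at h0 hI
    have hz0 : csinc (ε * 0) = 1 := by simp [csinc]
    rw [hz0] at h0
    simp only [mul_zero, neg_zero, Complex.exp_zero, mul_one, one_mul] at h0
    rw [← h0, one_mul] at hI
    have hsinc : csinc (ε * Complex.I) ≠ 0 := by
      rw [csinc, if_neg (mul_ne_zero hεc Complex.I_ne_zero)]
      apply div_ne_zero
      · rw [Ne, Complex.sin_eq_zero_iff]
        rintro ⟨k, hk⟩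
        have := congrArg Complex.im hk
        simp [Complex.mul_im, Complex.ofReal_re, Complex.ofReal_im] at this
        linarith
      · exact mul_ne_zero (by exact_mod_cast Real.pi_ne_zero) (mul_ne_zero hεc Complex.I_ne_zero)
    have hexp : Complex.exp (Real.pi * Complex.I * (2 * B - ε) * Complex.I)
        = Complex.exp (-(Real.pi * Complex.I * (2 * B - ε) * Complex.I)) :=
      mul_left_cancel₀ hsinc hI
    have e1 : ((Real.pi : ℂ) * Complex.I * (2 * B - ε) * Complex.I) = ((-(Real.pi * (2 * B - ε)) : ℝ) : ℂ) := by
      push_cast; linear_combination ((Real.pi : ℂ) * (2 * (B:ℂ) - ε)) * Complex.I_sq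
    have e2 : (-((Real.pi : ℂ) * Complex.I * (2 * B - ε) * Complex.I)) = (((Real.pi * (2 * B - ε)) : ℝ) : ℂ) := by
      push_cast; linear_combination (-(Real.pi : ℂ) * (2 * (B:ℂ) - ε)) * Complex.I_sq
    rw [e2, e1, ← Complex.ofReal_exp, ← Complex.ofReal_exp] at hexp
    have : -(Real.pi * (2 * B - ε)) = Real.pi * (2 * B - ε) :=
      Real.exp_injective (by exact_mod_cast hexp)
    nlinarith [Real.pi_pos]
end

section
/- Let B > 0, let c ∈ (0, 1/(2B)], and let f, g ∈ PW²_B be not identically zero. Suppose that |f(t)| = |g(t)| for all t ∈ ℝ and that f(t)·conj(f(t − c)) = g(t)·conj(g(t − c)) for all t ∈ ℝ. Then there exists α ∈ ℝ such that f = e^{iα} g (as functions on ℂ). -/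
open MeasureTheory Complex Real Set
open scoped ENNReal

namespace PWaux

variable {B : ℝ}

lemma finmeas (B : ℝ) : IsFiniteMeasure (volume.restrict (Icc (-B) B)) := by
  constructor
  rw [Measure.restrict_apply_univ]
  exact (measure_Icc_lt_top).trans_le le_top |>.trans_le le_rfl

lemma integrable_of_L2 {F : ℝ → ℂ} (hF : MemLp F 2 (volume.restrict (Icc (-B) B))) :
    Integrable F (volume.restrict (Icc (-B) B)) := by
  haveI := finmeas B
  exact hF.integrable (by norm_num)

lemma integrable_mul_cont {F : ℝ → ℂ} (hF : Integrable F (volume.restrict (Icc (-B) B)))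
    (φ : ℝ → ℂ) (hφ : Continuous φ) {C : ℝ} (hC : ∀ ξ ∈ Icc (-B) B, ‖φ ξ‖ ≤ C) :
    Integrable (fun ξ => φ ξ * F ξ) (volume.restrict (Icc (-B) B)) := by
  refine hF.bdd_mul (c := C) hφ.aestronglyMeasurable ?_
  filter_upwards [ae_restrict_mem measurableSet_Icc] with ξ hξ
  exact hC ξ hξ



lemma pw_differentiable {B : ℝ} (hB : 0 ≤ B) {F : ℝ → ℂ}
    (hF : Integrable F (volume.restrict (Icc (-B) B))) (a : ℂ) :
    Differentiable ℂ (fun z => ∫ ξ in Icc (-B) B, F ξ * Complex.exp (a * ξ * z)) := by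
  intro z₀
  set μ := volume.restrict (Icc (-B) B)
  have key := hasDerivAt_integral_of_dominated_loc_of_deriv_le (μ := μ)
    (F := fun z ξ => F ξ * Complex.exp (a * ξ * z))
    (F' := fun z ξ => F ξ * (Complex.exp (a * ξ * z) * (a * ξ)))
    (x₀ := z₀) (bound := fun ξ => ‖F ξ‖ * (Real.exp (‖a‖ * B * (‖z₀‖ + 1)) * (‖a‖ * B)))
    (s := Metric.ball z₀ 1) (Metric.ball_mem_nhds z₀ one_pos) ?_ ?_ ?_ ?_ ?_ ?_
  · exact key.2.differentiableAt
  · refine Filter.Eventually.of_forall fun z => ?_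
    refine hF.aestronglyMeasurable.mul ?_
    exact (Complex.continuous_exp.comp (by continuity)).aestronglyMeasurable
  · -- integrable at z₀
    have := integrable_mul_cont hF (fun ξ => Complex.exp (a * ξ * z₀))
      (Complex.continuous_exp.comp (by continuity))
      (C := Real.exp (‖a‖ * B * ‖z₀‖)) ?_
    · exact this.congr (Filter.Eventually.of_forall fun ξ => mul_comm _ _)
    · intro ξ hξ
      rw [Complex.norm_exp]
      refine Real.exp_le_exp.mpr ?_
      calc (a * ξ * z₀).re ≤ ‖a * ξ * z₀‖ := Complex.re_le_norm _
        _ = ‖a‖ * |ξ| * ‖z₀‖ := by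
            rw [norm_mul, norm_mul]; simp [Complex.norm_real]
        _ ≤ ‖a‖ * B * ‖z₀‖ := by
            have : |ξ| ≤ B := abs_le.mpr ⟨hξ.1, hξ.2⟩
            gcongr
  · refine (hF.aestronglyMeasurable.mul ?_)
    exact ((Complex.continuous_exp.comp (by continuity)).mul (by continuity)).aestronglyMeasurable
  · -- bound
    filter_upwards [ae_restrict_mem measurableSet_Icc] with ξ hξ
    intro z hz
    have hξB : |ξ| ≤ B := abs_le.mpr ⟨hξ.1, hξ.2⟩
    have hzn : ‖z‖ ≤ ‖z₀‖ + 1 := by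
      have := mem_ball_iff_norm.mp hz
      calc ‖z‖ = ‖z₀ + (z - z₀)‖ := by ring_nf
        _ ≤ ‖z₀‖ + ‖z - z₀‖ := norm_add_le _ _
        _ ≤ ‖z₀‖ + 1 := by linarith
    rw [norm_mul, norm_mul]
    refine mul_le_mul_of_nonneg_left ?_ (norm_nonneg _)
    refine mul_le_mul ?_ ?_ (norm_nonneg _) (Real.exp_nonneg _)
    · rw [Complex.norm_exp]
      refine Real.exp_le_exp.mpr ?_
      calc (a * ξ * z).re ≤ ‖a * ξ * z‖ := Complex.re_le_norm _
        _ = ‖a‖ * |ξ| * ‖z‖ := by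
            rw [norm_mul, norm_mul]; simp [Complex.norm_real]
        _ ≤ ‖a‖ * B * (‖z₀‖ + 1) := by
            gcongr <;> first | exact hξB | exact hzn
    · rw [norm_mul]
      gcongr
      simpa [Complex.norm_real] using hξB
  · exact (hF.norm.mul_const _)
  · refine Filter.Eventually.of_forall fun ξ => ?_
    intro z hz
    have h1 : HasDerivAt (fun z : ℂ => a * ξ * z) (a * ξ) z := by
      simpa using (hasDerivAt_id z).const_mul (a * (ξ:ℂ))
    exact (h1.cexp).const_mul (F ξ)

lemma entire_eq_of_real_eq {h₁ h₂ : ℂ → ℂ} (d₁ : Differentiable ℂ h₁)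
    (d₂ : Differentiable ℂ h₂) (h : ∀ t : ℝ, h₁ t = h₂ t) : h₁ = h₂ := by
  have a₁ : AnalyticOnNhd ℂ h₁ univ := analyticOnNhd_univ_iff_differentiable.mpr d₁
  have a₂ : AnalyticOnNhd ℂ h₂ univ := analyticOnNhd_univ_iff_differentiable.mpr d₂
  refine a₁.eq_of_frequently_eq a₂ (z₀ := 0) ?_
  have htt : Filter.Tendsto (fun n : ℕ => Complex.ofReal (((n:ℝ)+1)⁻¹)) Filter.atTop (nhdsWithin 0 {(0:ℂ)}ᶜ) := by
    rw [tendsto_nhdsWithin_iff]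
    constructor
    · have : Filter.Tendsto (fun n : ℕ => ((n:ℝ)+1)⁻¹) Filter.atTop (nhds 0) :=
        tendsto_one_div_add_atTop_nhds_zero_nat.congr (by intro n; rw [one_div])
      have := (Complex.continuous_ofReal.tendsto 0).comp this
      exact this.congr fun n => rfl
    · refine Filter.Eventually.of_forall fun n => ?_
      simp only [mem_compl_iff, mem_singleton_iff, Complex.ofReal_eq_zero]
      exact inv_ne_zero (by positivity : ((n:ℝ)+1) ≠ 0)
  exact htt.frequently (Filter.Frequently.of_forall fun n => h _)

lemma entire_eq_zero_of_mul {p q : ℂ → ℂ} (dp : Differentiable ℂ p)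
    (dq : Differentiable ℂ q) (h : ∀ z, p z * q z = 0) (hp : p ≠ 0) : ∀ z, q z = 0 := by
  by_contra hq
  push_neg at hq
  obtain ⟨z₀, hz₀⟩ := hq
  have hev : p =ᶠ[nhds z₀] 0 := by
    have : ∀ᶠ z in nhds z₀, q z ≠ 0 := (dq.continuous.continuousAt).eventually_ne hz₀
    filter_upwards [this] with z hz
    have := h z
    rcases mul_eq_zero.mp this with h' | h'
    · exact h'
    · exact absurd h' hz
  have := AnalyticOnNhd.eq_of_eventuallyEq (analyticOnNhd_univ_iff_differentiable.mpr dp)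
    (analyticOnNhd_const (v := (0:ℂ))) hev
  exact hp (by funext z; exact congrFun this z)

lemma fourier_unique {B c : ℝ} (hB : 0 < B) (hc : 0 < c) (hBc : 2 * B ≤ 1 / c)
    {H : ℝ → ℂ} (hH : MemLp H 2 (volume.restrict (Icc (-B) B)))
    (hcoef : ∀ n : ℤ, (∫ ξ in Icc (-B) B,
      H ξ * Complex.exp (2 * π * Complex.I * ξ * ((n : ℂ) * c))) = 0) :
    ∀ᵐ ξ ∂(volume.restrict (Icc (-B) B)), H ξ = 0 := by
  set T : ℝ := 1 / c with hTdef
  have hT : 0 < T := by positivity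
  haveI : Fact (0 < T) := ⟨hT⟩
  set a : ℝ := -(T / 2) with hadef
  have haT : a + T = T / 2 := by rw [hadef]; ring
  have hBT2 : B ≤ T / 2 := by linarith
  -- measurable representative
  set Hm : ℝ → ℂ := hH.aestronglyMeasurable.mk H with hHmdef
  have hmSM : StronglyMeasurable Hm := hH.aestronglyMeasurable.stronglyMeasurable_mk
  have hae : H =ᵐ[volume.restrict (Icc (-B) B)] Hm := hH.aestronglyMeasurable.ae_eq_mk
  have hHm2 : MemLp Hm 2 (volume.restrict (Icc (-B) B)) := hH.ae_eq hae
  have hcoefm : ∀ n : ℤ, (∫ ξ in Icc (-B) B,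
      Hm ξ * Complex.exp (2 * π * Complex.I * ξ * ((n : ℂ) * c))) = 0 := by
    intro n
    rw [← hcoef n]
    refine integral_congr_ae ?_
    filter_upwards [hae] with ξ hξ
    rw [hξ]
  set H' : ℝ → ℂ := Set.indicator (Icc (-B) B) Hm with hH'def
  have hH'SM : StronglyMeasurable H' := hmSM.indicator measurableSet_Icc
  have hH'2 : MemLp H' 2 volume := (memLp_indicator_iff_restrict measurableSet_Icc).mpr hHm2
  set μI := volume.restrict (Ioc a (a + T)) with hμIdef
  set φ : AddCircle T → ℂ := AddCircle.liftIoc T a H' with hφdef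
  have hφm : Measurable φ := by
    exact ((hH'SM.measurable.comp measurable_subtype_coe).comp
      (AddCircle.measurableEquivIoc T a).measurable)
  have hcompae : H' =ᵐ[μI] (fun x : ℝ => φ (x : AddCircle T)) := by
    filter_upwards [ae_restrict_mem measurableSet_Ioc] with x hx
    rw [hφdef, AddCircle.liftIoc_coe_apply hx]
  have hφvol : MemLp φ 2 (volume : Measure (AddCircle T)) := by
    rw [← (AddCircle.measurePreserving_mk T a).map_eq]
    rw [memLp_map_measure_iff hφm.stronglyMeasurable.aestronglyMeasurable
      AddCircle.measurable_mk'.aemeasurable]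
    exact (hH'2.restrict _).ae_eq hcompae
  have hφhaar : MemLp φ 2 (AddCircle.haarAddCircle : Measure (AddCircle T)) := by
    have hofne : (ENNReal.ofReal T) ≠ 0 := by
      rw [ne_eq, ENNReal.ofReal_eq_zero]; exact hT.not_ge
    have h1 : ((ENNReal.ofReal T)⁻¹ : ℝ≥0∞) • (volume : Measure (AddCircle T))
        = AddCircle.haarAddCircle := by
      rw [AddCircle.volume_eq_smul_haarAddCircle, smul_smul,
        ENNReal.inv_mul_cancel hofne ENNReal.ofReal_ne_top, one_smul]
    rw [← h1]
    exact hφvol.smul_measure (ENNReal.inv_ne_top.mpr hofne)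
  set Φ := hφhaar.toLp φ with hΦdef
  -- Fourier coefficients of Φ vanish
  have hIccae : ((Icc (-B) B : Set ℝ) : Set ℝ) =ᵐ[(volume : Measure ℝ)] ((Icc (-B) B ∩ Ioc a (a + T) : Set ℝ)) := by
    rw [MeasureTheory.ae_eq_set]
    constructor
    · refine measure_mono_null (fun x hx => ?_) (Real.volume_singleton (a := a))
      obtain ⟨hx1, hx2⟩ := hx
      simp only [mem_singleton_iff]
      by_contra hxa
      exact hx2 ⟨hx1, by
        constructor
        · rcases lt_or_eq_of_le (le_trans (by rw [hadef]; linarith : a ≤ -B) hx1.1) with h | h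
          · exact h
          · exact absurd h.symm hxa
        · rw [haT]; linarith [hx1.2]⟩
    · refine measure_mono_null (fun x hx => ?_) (measure_empty (μ := volume))
      exact absurd hx.1.1 (by simp [hx.2])
  have hcoefΦ : ∀ n : ℤ, fourierBasis.repr Φ n = 0 := by
    intro n
    rw [fourierBasis_repr]
    have e1 : fourierCoeff (⇑Φ) n = fourierCoeff φ n := by
      unfold fourierCoeff
      refine integral_congr_ae ?_
      filter_upwards [hφhaar.coeFn_toLp] with x hx
      rw [hx]
    rw [e1, hφdef, fourierCoeff_liftIoc_eq,
      fourierCoeffOn_eq_integral]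
    have e2 : (∫ x in a..a + T, fourier (-n) (x : AddCircle (a + T - a)) • H' x) = 0 := by
      have hle : a ≤ a + T := by linarith
      rw [intervalIntegral.integral_of_le hle]
      have e3 : ∀ x : ℝ, fourier (-n) (x : AddCircle (a + T - a)) • H' x
          = Set.indicator (Icc (-B) B)
            (fun x : ℝ => Hm x * Complex.exp (2 * π * Complex.I * x * (((-n : ℤ) : ℂ) * c))) x := by
        intro x
        by_cases hx : x ∈ Icc (-B) B
        · rw [Set.indicator_of_mem hx, hH'def, Set.indicator_of_mem hx, smul_eq_mul, mul_comm]
          congr 1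
          rw [fourier_coe_apply]
          congr 1
          have hcne : (c : ℂ) ≠ 0 := by
            simp only [ne_eq, Complex.ofReal_eq_zero]; exact hc.ne'
          have : a + T - a = T := by ring
          rw [this, hTdef]
          push_cast
          field_simp
        · rw [Set.indicator_of_notMem hx, hH'def, Set.indicator_of_notMem hx, smul_zero]
      simp_rw [e3]
      rw [integral_indicator measurableSet_Icc, Measure.restrict_restrict measurableSet_Icc,
        ← Measure.restrict_congr_set hIccae]
      exact hcoefm (-n)
    rw [e2, smul_zero]
  have hΦ0 : Φ = 0 := by
    apply fourierBasis.repr.injective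
    ext n
    simp [hcoefΦ n]
  have hφ0 : φ =ᵐ[(AddCircle.haarAddCircle : Measure (AddCircle T))] 0 := by
    refine (hφhaar.coeFn_toLp.symm).trans ?_
    rw [← hΦdef, hΦ0]
    exact Lp.coeFn_zero ℂ 2 _
  have hφ0v : φ =ᵐ[(volume : Measure (AddCircle T))] 0 := by
    rw [AddCircle.volume_eq_smul_haarAddCircle]
    exact Measure.ae_smul_measure hφ0 _
  have hpull : (fun x : ℝ => φ (x : AddCircle T)) =ᵐ[μI] 0 := by
    have h1 : φ =ᵐ[Measure.map (fun x : ℝ => (x : AddCircle T)) μI] 0 := by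
      rw [(AddCircle.measurePreserving_mk T a).map_eq]; exact hφ0v
    exact ae_eq_comp AddCircle.measurable_mk'.aemeasurable h1
  have hH'0 : H' =ᵐ[μI] 0 := hcompae.trans hpull
  have hH'0' : H' =ᵐ[volume.restrict (Icc (-B) B)] 0 := by
    rw [Measure.restrict_congr_set hIccae]
    exact hH'0.filter_mono (ae_mono (Measure.restrict_mono inter_subset_right le_rfl))
  filter_upwards [hH'0', hae, ae_restrict_mem measurableSet_Icc] with x h1 h2 h3
  rw [h2, ← Set.indicator_of_mem h3 Hm, ← hH'def, h1]
  rfl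

end PWaux

open PWaux

theorem paley_wiener_phase_from_abs_and_correlation (B c : ℝ) (hB : 0 < B)
    (hc : c ∈ Set.Ioc (0 : ℝ) (1 / (2 * B)))
    (f g : ℂ → ℂ) (hf : MemPW B 2 f) (hg : MemPW B 2 g)
    (hf0 : f ≠ 0) (hg0 : g ≠ 0)
    (habs : ∀ t : ℝ, ‖f t‖ = ‖g t‖)
    (hcorr : ∀ t : ℝ, f t * (starRingEnd ℂ) (f ((t - c : ℝ) : ℂ)) =
      g t * (starRingEnd ℂ) (g ((t - c : ℝ) : ℂ))) :
    ∃ α : ℝ, f = fun z => Complex.exp (Complex.I * α) * g z := by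
  obtain ⟨hc0, hcB⟩ := hc
  obtain ⟨F, hF2, hFrep⟩ := hf
  obtain ⟨G, hG2, hGrep⟩ := hg
  set S : Set ℝ := Icc (-B) B with hSdef
  set μ : Measure ℝ := volume.restrict S with hμdef
  have hFint : Integrable F μ := integrable_of_L2 hF2
  have hGint : Integrable G μ := integrable_of_L2 hG2
  set Fc : ℝ → ℂ := fun ξ => (starRingEnd ℂ) (F ξ) with hFcdef
  set Gc : ℝ → ℂ := fun ξ => (starRingEnd ℂ) (G ξ) with hGcdef
  have hFcint : Integrable Fc μ := by
    refine ⟨?_, ?_⟩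
    · exact Complex.continuous_conj.comp_aestronglyMeasurable hFint.1
    · have := hFint.2
      simpa [HasFiniteIntegral, hFcdef] using this
  have hGcint : Integrable Gc μ := by
    refine ⟨?_, ?_⟩
    · exact Complex.continuous_conj.comp_aestronglyMeasurable hGint.1
    · have := hGint.2
      simpa [HasFiniteIntegral, hGcdef] using this
  have hFc2 : MemLp Fc 2 μ := by
    refine hF2.of_le (Complex.continuous_conj.comp_aestronglyMeasurable hF2.1) ?_
    exact Filter.Eventually.of_forall fun ξ => by simp [hFcdef]
  have hGc2 : MemLp Gc 2 μ := by
    refine hG2.of_le (Complex.continuous_conj.comp_aestronglyMeasurable hG2.1) ?_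
    exact Filter.Eventually.of_forall fun ξ => by simp [hGcdef]
  -- conjugate-reflected functions
  set fs : ℂ → ℂ := fun z => (starRingEnd ℂ) (f ((starRingEnd ℂ) z)) with hfsdef
  set gs : ℂ → ℂ := fun z => (starRingEnd ℂ) (g ((starRingEnd ℂ) z)) with hgsdef
  have hfs_rep : ∀ z : ℂ, fs z = ∫ ξ in S, Fc ξ * Complex.exp (-(2 * π * Complex.I) * ξ * z) := by
    intro z
    rw [hfsdef]
    simp only
    rw [hFrep ((starRingEnd ℂ) z), ← integral_conj]
    refine integral_congr_ae (Filter.Eventually.of_forall fun ξ => ?_)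
    show (starRingEnd ℂ) (F ξ * Complex.exp (2 * ↑π * Complex.I * ↑ξ * ((starRingEnd ℂ) z)))
        = Fc ξ * Complex.exp (-(2 * ↑π * Complex.I) * ↑ξ * z)
    rw [map_mul, ← Complex.exp_conj]
    congr 1
    congr 1
    simp only [map_mul, Complex.conj_conj, Complex.conj_I, Complex.conj_ofReal, map_ofNat]
    ring
  have hgs_rep : ∀ z : ℂ, gs z = ∫ ξ in S, Gc ξ * Complex.exp (-(2 * π * Complex.I) * ξ * z) := by
    intro z
    rw [hgsdef]
    simp only
    rw [hGrep ((starRingEnd ℂ) z), ← integral_conj]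
    refine integral_congr_ae (Filter.Eventually.of_forall fun ξ => ?_)
    show (starRingEnd ℂ) (G ξ * Complex.exp (2 * ↑π * Complex.I * ↑ξ * ((starRingEnd ℂ) z)))
        = Gc ξ * Complex.exp (-(2 * ↑π * Complex.I) * ↑ξ * z)
    rw [map_mul, ← Complex.exp_conj]
    congr 1
    congr 1
    simp only [map_mul, Complex.conj_conj, Complex.conj_I, Complex.conj_ofReal, map_ofNat]
    ring
  -- differentiability
  have hfd : Differentiable ℂ f := by
    rw [funext hFrep]
    exact pw_differentiable hB.le hFint (2 * π * Complex.I)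
  have hgd : Differentiable ℂ g := by
    rw [funext hGrep]
    exact pw_differentiable hB.le hGint (2 * π * Complex.I)
  have hfsd : Differentiable ℂ fs := by
    rw [funext hfs_rep]
    exact pw_differentiable hB.le hFcint (-(2 * π * Complex.I))
  have hgsd : Differentiable ℂ gs := by
    rw [funext hgs_rep]
    exact pw_differentiable hB.le hGcint (-(2 * π * Complex.I))
  -- real-line identities
  have hfs_real : ∀ t : ℝ, fs t = (starRingEnd ℂ) (f t) := by
    intro t; rw [hfsdef]; simp [Complex.conj_ofReal]
  have hgs_real : ∀ t : ℝ, gs t = (starRingEnd ℂ) (g t) := by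
    intro t; rw [hgsdef]; simp [Complex.conj_ofReal]
  have hA : ∀ z : ℂ, f z * fs z = g z * gs z := by
    have := entire_eq_of_real_eq (hfd.mul hfsd) (hgd.mul hgsd) ?_
    · exact fun z => congrFun this z
    intro t
    simp only [Pi.mul_apply, hfs_real t, hgs_real t, Complex.mul_conj]
    rw [Complex.normSq_eq_norm_sq, Complex.normSq_eq_norm_sq, habs t]
  have h5 : ∀ z : ℂ, f z * fs (z - c) = g z * gs (z - c) := by
    have := entire_eq_of_real_eq
      (hfd.mul (hfsd.comp (differentiable_id.sub_const (c : ℂ))))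
      (hgd.mul (hgsd.comp (differentiable_id.sub_const (c : ℂ)))) ?_
    · exact fun z => congrFun this z
    intro t
    show f (t:ℂ) * fs ((t:ℂ) - c) = g (t:ℂ) * gs ((t:ℂ) - c)
    have hcast : ((t : ℂ) - (c : ℂ)) = ((t - c : ℝ) : ℂ) := by push_cast; ring
    have h1 : fs ((t : ℂ) - c) = (starRingEnd ℂ) (f ((t - c : ℝ) : ℂ)) := by
      rw [hcast, hfs_real (t - c)]
    have h2 : gs ((t : ℂ) - c) = (starRingEnd ℂ) (g ((t - c : ℝ) : ℂ)) := by
      rw [hcast, hgs_real (t - c)]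
    rw [h1, h2]
    exact hcorr t
  -- nonvanishing of shifted gs
  have hgne : ∃ z₀, g z₀ ≠ 0 := by
    by_contra h; push_neg at h; exact hg0 (funext fun z => h z)
  obtain ⟨z₀, hz₀⟩ := hgne
  have hgs_shift_ne : ∀ w : ℂ, (fun z => gs (z - w)) ≠ 0 := by
    intro w hcontra
    apply hz₀
    have := congrFun hcontra ((starRingEnd ℂ) z₀ + w)
    simp only [Pi.zero_apply, add_sub_cancel_right, hgsdef, Complex.conj_conj] at this
    exact (map_eq_zero (starRingEnd ℂ)).mp this
  have hshift : ∀ (h : ℂ → ℂ), Differentiable ℂ h → ∀ w : ℂ,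
      Differentiable ℂ (fun z => h (z - w)) :=
    fun h hd w => hd.comp (differentiable_id.sub_const w)
  -- step (*) : fs z * gs (z-c) = gs z * fs (z-c)
  have hstar : ∀ z : ℂ, fs z * gs (z - c) = gs z * fs (z - c) := by
    have key := entire_eq_zero_of_mul
      (q := fun z => fs z * gs (z - (c:ℂ)) - gs z * fs (z - (c:ℂ))) hfd
      ((hfsd.mul (hshift gs hgsd c)).sub (hgsd.mul (hshift fs hfsd c)))
      (fun z => by linear_combination gs (z - (c:ℂ)) * hA z - gs z * h5 z) hf0
    intro z
    exact sub_eq_zero.mp (key z)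
  -- upward induction
  have hplus : ∀ n : ℕ, ∀ z : ℂ, f z * fs (z - n * c) = g z * gs (z - n * c) := by
    intro n
    induction n with
    | zero => intro z; simpa using hA z
    | succ n ih =>
      have dq : Differentiable ℂ
          (fun z => f z * fs (z - (n:ℂ) * c - c) - g z * gs (z - (n:ℂ) * c - c)) :=
        (hfd.mul (hfsd.comp ((differentiable_id.sub_const ((n:ℂ)*c)).sub_const (c:ℂ)))).sub
          (hgd.mul (hgsd.comp ((differentiable_id.sub_const ((n:ℂ)*c)).sub_const (c:ℂ))))
      have key := entire_eq_zero_of_mul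
        (q := fun z => f z * fs (z - (n:ℂ) * c - c) - g z * gs (z - (n:ℂ) * c - c))
        (hshift gs hgsd ((n:ℂ) * c)) dq
        (fun z => by
          linear_combination (-(f z)) * hstar (z - (n:ℂ) * c) + gs (z - (n:ℂ) * c - c) * ih z)
        (hgs_shift_ne _)
      intro z
      have harg : z - ((n+1:ℕ):ℂ) * c = z - (n:ℂ) * c - c := by push_cast; ring
      rw [harg]
      exact sub_eq_zero.mp (key z)
  -- downward induction
  have hfs_shift_ne : ∀ w : ℂ, (fun z => fs (z - w)) ≠ 0 := by
    intro w hcontra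
    have hfe : ∃ z₁, f z₁ ≠ 0 := by
      by_contra h; push_neg at h; exact hf0 (funext fun z => h z)
    obtain ⟨z₁, hz₁⟩ := hfe
    apply hz₁
    have := congrFun hcontra ((starRingEnd ℂ) z₁ + w)
    simp only [Pi.zero_apply, add_sub_cancel_right, hfsdef, Complex.conj_conj] at this
    exact (map_eq_zero (starRingEnd ℂ)).mp this
  have hminus : ∀ n : ℕ, ∀ z : ℂ, f z * fs (z + n * c) = g z * gs (z + n * c) := by
    intro n
    induction n with
    | zero => intro z; simpa using hA z
    | succ n ih =>
      have hgs_shift_ne' : (fun z : ℂ => gs (z + (n:ℂ) * c)) ≠ 0 := by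
        have := hgs_shift_ne (-((n:ℂ) * c))
        intro hcontra
        apply this
        funext z
        have := congrFun hcontra z
        simpa [sub_neg_eq_add] using this
      have dq : Differentiable ℂ
          (fun z => f z * fs (z + (n:ℂ) * c + c) - g z * gs (z + (n:ℂ) * c + c)) :=
        (hfd.mul (hfsd.comp ((differentiable_id.add_const ((n:ℂ)*c)).add_const (c:ℂ)))).sub
          (hgd.mul (hgsd.comp ((differentiable_id.add_const ((n:ℂ)*c)).add_const (c:ℂ))))
      have dp : Differentiable ℂ (fun z : ℂ => gs (z + (n:ℂ) * c)) :=
        hgsd.comp (differentiable_id.add_const ((n:ℂ)*c))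
      have hstar' : ∀ z : ℂ,
          fs (z + (n:ℂ) * c + c) * gs (z + (n:ℂ) * c) = gs (z + (n:ℂ) * c + c) * fs (z + (n:ℂ) * c) := by
        intro z
        have := hstar (z + (n:ℂ) * c + c)
        have harg : z + (n:ℂ) * c + c - c = z + (n:ℂ) * c := by ring
        rw [harg] at this
        exact this
      have key := entire_eq_zero_of_mul
        (q := fun z => f z * fs (z + (n:ℂ) * c + c) - g z * gs (z + (n:ℂ) * c + c))
        dp dq
        (fun z => by
          linear_combination (f z) * hstar' z + gs (z + (n:ℂ) * c + c) * ih z)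
        hgs_shift_ne'
      intro z
      have harg : z + ((n+1:ℕ):ℂ) * c = z + (n:ℂ) * c + c := by push_cast; ring
      rw [harg]
      exact sub_eq_zero.mp (key z)
  -- all integer shifts
  have hall : ∀ n : ℤ, ∀ z : ℂ, f z * fs (z - n * c) = g z * gs (z - n * c) := by
    intro n z
    rcases n.eq_nat_or_neg with ⟨m, rfl | rfl⟩
    · push_cast
      exact hplus m z
    · push_cast
      simp only [neg_mul, sub_neg_eq_add]
      exact hminus m z
  -- key sampling step
  have h2B : 2 * B ≤ 1 / c := (le_div_iff₀ hc0).mpr (by nlinarith [(le_div_iff₀ (show (0:ℝ) < 2*B by positivity)).mp hcB])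
  have hexp_bound : ∀ (w : ℂ) (ξ : ℝ), ξ ∈ S →
      ‖Complex.exp (-(2 * π * Complex.I) * ξ * w)‖ ≤ Real.exp (2 * π * B * ‖w‖) := by
    intro w ξ hξ
    rw [Complex.norm_exp]
    refine Real.exp_le_exp.mpr ?_
    calc (-(2 * ↑π * Complex.I) * ↑ξ * w).re ≤ ‖-(2 * ↑π * Complex.I) * ↑ξ * w‖ :=
          Complex.re_le_norm _
      _ = 2 * π * |ξ| * ‖w‖ := by
          rw [norm_mul, norm_mul, norm_neg]
          simp [Complex.norm_real, abs_of_pos Real.pi_pos, map_mul]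
      _ ≤ 2 * π * B * ‖w‖ := by
          have h1 : |ξ| ≤ B := abs_le.mpr ⟨hξ.1, hξ.2⟩
          have h2 : (0:ℝ) ≤ 2 * π := by positivity
          gcongr
  have hexp_cont : ∀ w : ℂ, Continuous (fun ξ : ℝ => Complex.exp (-(2 * π * Complex.I) * ξ * w)) :=
    fun w => Complex.continuous_exp.comp
      ((continuous_const.mul Complex.continuous_ofReal).mul continuous_const)
  have hintFc : ∀ w : ℂ,
      Integrable (fun ξ => Fc ξ * Complex.exp (-(2 * π * Complex.I) * ξ * w)) μ := by
    intro w
    exact (integrable_mul_cont hFcint _ (hexp_cont w) (fun ξ hξ => hexp_bound w ξ hξ)).congr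
      (Filter.Eventually.of_forall fun ξ => mul_comm _ _)
  have hintGc : ∀ w : ℂ,
      Integrable (fun ξ => Gc ξ * Complex.exp (-(2 * π * Complex.I) * ξ * w)) μ := by
    intro w
    exact (integrable_mul_cont hGcint _ (hexp_cont w) (fun ξ hξ => hexp_bound w ξ hξ)).congr
      (Filter.Eventually.of_forall fun ξ => mul_comm _ _)
  have key : ∀ z : ℂ, ∀ᵐ ξ ∂μ, f z * Fc ξ = g z * Gc ξ := by
    intro z
    set D : ℝ → ℂ := fun ξ => f z * Fc ξ - g z * Gc ξ with hDdef
    set E : ℝ → ℂ := fun ξ => Complex.exp (-(2 * π * Complex.I) * ξ * z) with hEdef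
    have hD2 : MemLp D 2 μ := (hFc2.const_mul (f z)).sub (hGc2.const_mul (g z))
    have hH2 : MemLp (fun ξ => D ξ * E ξ) 2 μ := by
      have hbase : MemLp (fun ξ => ((Real.exp (2 * π * B * ‖z‖) : ℝ) : ℂ) * D ξ) 2 μ :=
        hD2.const_mul _
      refine hbase.of_le (hD2.aestronglyMeasurable.mul (hexp_cont z).aestronglyMeasurable) ?_
      filter_upwards [ae_restrict_mem measurableSet_Icc] with ξ hξ
      have hE : ‖E ξ‖ ≤ Real.exp (2 * π * B * ‖z‖) := hexp_bound z ξ hξ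
      have hcnorm : ‖((Real.exp (2 * π * B * ‖z‖) : ℝ) : ℂ)‖ = Real.exp (2 * π * B * ‖z‖) := by
        simp [Complex.norm_exp]
      calc ‖D ξ * E ξ‖ = ‖D ξ‖ * ‖E ξ‖ := norm_mul _ _
        _ ≤ ‖D ξ‖ * Real.exp (2 * π * B * ‖z‖) :=
            mul_le_mul_of_nonneg_left hE (norm_nonneg _)
        _ = ‖((Real.exp (2 * π * B * ‖z‖) : ℝ) : ℂ) * D ξ‖ := by
            rw [norm_mul, hcnorm]; ring
    have hcoefs : ∀ n : ℤ, (∫ ξ in S,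
        (D ξ * E ξ) * Complex.exp (2 * π * Complex.I * ξ * ((n : ℂ) * c))) = 0 := by
      intro n
      have hid : ∀ ξ : ℝ, (D ξ * E ξ) * Complex.exp (2 * π * Complex.I * ξ * ((n : ℂ) * c))
          = f z * (Fc ξ * Complex.exp (-(2 * π * Complex.I) * ξ * (z - (n:ℂ) * c)))
            - g z * (Gc ξ * Complex.exp (-(2 * π * Complex.I) * ξ * (z - (n:ℂ) * c))) := by
        intro ξ
        rw [hDdef, hEdef]
        simp only
        rw [show (-(2 * ↑π * Complex.I) * ↑ξ * (z - (n:ℂ) * c))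
            = (-(2 * ↑π * Complex.I) * ↑ξ * z) + 2 * ↑π * Complex.I * ↑ξ * ((n:ℂ) * c) by ring,
          Complex.exp_add]
        ring
      simp_rw [hid]
      rw [integral_sub ((hintFc (z - (n:ℂ) * c)).const_mul (f z))
        ((hintGc (z - (n:ℂ) * c)).const_mul (g z)),
        integral_const_mul, integral_const_mul, ← hfs_rep (z - (n:ℂ) * c),
        ← hgs_rep (z - (n:ℂ) * c), sub_eq_zero]
      exact hall n z
    have h0 := fourier_unique hB hc0 h2B hH2 hcoefs
    filter_upwards [h0] with ξ hξ
    rcases mul_eq_zero.mp hξ with h | h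
    · have h2 : f z * Fc ξ - g z * Gc ξ = 0 := by simpa [hDdef] using h
      exact sub_eq_zero.mp h2
    · exact absurd h (Complex.exp_ne_zero _)
  -- conclude proportionality
  have hGne0 : ¬ (∀ᵐ ξ ∂μ, Gc ξ = 0) := by
    intro hGc0
    apply hz₀
    rw [hGrep z₀]
    refine integral_eq_zero_of_ae ?_
    filter_upwards [hGc0] with ξ h
    have hG0 : G ξ = 0 := by
      have h2 := congrArg (starRingEnd ℂ) h
      simpa [hGcdef] using h2
    simp [hG0]
  have hprop : ∀ z : ℂ, f z₀ * g z - f z * g z₀ = 0 := by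
    intro z
    by_contra hne
    apply hGne0
    filter_upwards [key z, key z₀] with ξ k1 k2
    have hz : (f z₀ * g z - f z * g z₀) * Gc ξ = 0 := by
      linear_combination (-(f z₀)) * k1 + f z * k2
    rcases mul_eq_zero.mp hz with h | h
    · exact absurd h hne
    · exact h
  have hgreal : ∃ t : ℝ, g t ≠ 0 := by
    by_contra h
    push_neg at h
    have := entire_eq_of_real_eq hgd (differentiable_const (0:ℂ)) (fun t => by simpa using h t)
    exact hg0 (by funext z; exact congrFun this z)
  obtain ⟨t₀, ht₀⟩ := hgreal
  set ν : ℂ := f z₀ / g z₀ with hνdef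
  have hfν : ∀ z, f z = ν * g z := by
    intro z
    have h := hprop z
    rw [hνdef]
    field_simp
    linear_combination (-(1:ℂ)) * h
  have hν1 : ‖ν‖ = 1 := by
    have h1 := habs t₀
    rw [hfν t₀, norm_mul] at h1
    have hg' : ‖g (t₀:ℂ)‖ ≠ 0 := norm_ne_zero_iff.mpr ht₀
    have h2 : ‖ν‖ * ‖g (t₀:ℂ)‖ = 1 * ‖g (t₀:ℂ)‖ := by rw [one_mul]; exact h1
    have h3 : ‖ν‖ = 1 := mul_right_cancel₀ hg' h2
    exact h3
  refine ⟨ν.arg, funext fun z => ?_⟩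
  have hexpν : Complex.exp (Complex.I * ν.arg) = ν := by
    have h := Complex.norm_mul_exp_arg_mul_I ν
    rw [hν1] at h
    rw [mul_comm Complex.I (ν.arg : ℂ)]
    simpa using h
  calc f z = ν * g z := hfν z
    _ = Complex.exp (Complex.I * ν.arg) * g z := by rw [hexpν]
end
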